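/- Let A ⊆ B be rings, N ≥ 1, and for each i = 1, …, N let a_1^{(i)}, …, a_{n_i}^{(i)} ∈ B generate the unit ideal of B. Assume that for every unbounded A-valuation v on B there exists some i with v(a_j^{(i)}) ≤ v(a_1^{(i)}) for all j = 1, …, n_i. Let I = {(r_1,…,r_N) : 1 ≤ r_i ≤ n_i for all i}, let I' = {r ∈ I : r_i = 1 for some i}, and for r = (r_1,…,r_N) ∈ I set a_r = a_{r_1}^{(1)} · a_{r_2}^{(2)} ⋯ a_{r_N}^{(N)}. Then: (1) the family {a_r : r ∈ I'} generates the unit ideal of B; (2) for each r ∈ I', an unbounded A-valuation v satisfies v(a_s) ≤ v(a_r) for all s ∈ I' if and only if it satisfies v(a_s) ≤ v(a_r) for all s ∈ I; (3) every unbounded A-valuation v satisfies v(a_s) ≤ v(a_r) for all s ∈ I' for some r ∈ I'; (4) if r ∈ I' has r_i = 1 and v is an unbounded A-valuation with v(a_s) ≤ v(a_r) for all s ∈ I, then v(a_j^{(i)}) ≤ v(a_1^{(i)}) for all j = 1, …, n_i. -/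

import Mathlib

/-- A valuation `v` on `B` is *unbounded* (with respect to the subgroup of the value
group generated by its nonzero values, which is the value group in the paper's
convention) if no element of that subgroup strictly bounds all values of `v`. -/
def ValUnbounded {B : Type*} [CommRing B] {Γ : Type*} [LinearOrderedCommGroupWithZero Γ]
    (v : Valuation B Γ) : Prop :=
  ∀ γ ∈ Subgroup.closure {g : Γˣ | (g : Γ) ∈ Set.range v}, ∃ b : B, (γ : Γ) ≤ v b

section Aux

variable {B : Type*} [CommRing B] {Γ : Type*} [LinearOrderedCommGroupWithZero Γ]

open Classical in
/-- The trivial valuation attached to a prime ideal. -/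
noncomputable def trivVal (m : Ideal B) (hm : m.IsPrime) : Valuation B Γ where
  toFun b := if b ∈ m then 0 else 1
  map_zero' := if_pos m.zero_mem
  map_one' := by rw [if_neg]; exact (Ideal.ne_top_iff_one m).mp hm.ne_top
  map_mul' x y := by
    by_cases hx : x ∈ m
    · rw [if_pos hx, if_pos (m.mul_mem_right y hx), zero_mul]
    · by_cases hy : y ∈ m
      · rw [if_pos hy, if_pos (m.mul_mem_left x hy), mul_zero]
      · rw [if_neg hx, if_neg hy, if_neg (fun h => ((hm.mem_or_mem h).elim hx hy)), one_mul]
  map_add_le_max' x y := by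
    by_cases hx : x ∈ m
    · by_cases hy : y ∈ m
      · rw [if_pos (m.add_mem hx hy)]
        exact le_max_of_le_left (by split <;> simp)
      · refine le_max_of_le_right ?_
        rw [if_neg hy]; split <;> simp
    · refine le_max_of_le_left ?_
      rw [if_neg hx]; split <;> simp

open Classical in
lemma trivVal_apply (m : Ideal B) (hm : m.IsPrime) (b : B) :
    trivVal (Γ := Γ) m hm b = if b ∈ m then 0 else 1 := rfl

lemma trivVal_unbounded (m : Ideal B) (hm : m.IsPrime) :
    ValUnbounded (trivVal (Γ := Γ) m hm) := by
  intro γ hγ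
  have hsub : {g : Γˣ | (g : Γ) ∈ Set.range (trivVal (Γ := Γ) m hm)} ⊆ ↑(⊥ : Subgroup Γˣ) := by
    rintro g ⟨b, hb⟩
    rw [Subgroup.coe_bot, Set.mem_singleton_iff]
    ext
    rw [trivVal_apply] at hb
    split at hb
    · exact absurd hb.symm g.ne_zero
    · exact hb.symm
  have : γ ∈ (⊥ : Subgroup Γˣ) := (Subgroup.closure_le _).mpr hsub hγ
  rw [Subgroup.mem_bot] at this
  subst this
  exact ⟨1, by simp [trivVal_apply, (Ideal.ne_top_iff_one m).mp hm.ne_top]⟩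

end Aux

/-- refinement of a finite cover of `Val(B,A)` by rational domains to a
rational covering.  For each `i`, `a i 0, …, a i (n i - 1)` generate the unit ideal
(the distinguished first element is `a i ⟨0, hn i⟩`), and the rational domains
`{v : ∀ j, v (a i j) ≤ v (a i 0)}` cover `Val(B,A)`.  With `a_r = ∏ i, a i (r i)` and
`I' = {r : ∃ i, r i = 0}`, the conclusions (1)–(4) hold. -/
theorem stmt13 {B : Type*} [CommRing B] {Γ : Type*} [LinearOrderedCommGroupWithZero Γ]
    (A : Subring B) (N : ℕ) (hN : 1 ≤ N) (n : Fin N → ℕ) (hn : ∀ i, 0 < n i)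
    (a : (i : Fin N) → Fin (n i) → B)
    (hgen : ∀ i, Ideal.span (Set.range (a i)) = ⊤)
    (hcov : ∀ v : Valuation B Γ, ValUnbounded v → (∀ x ∈ A, v x ≤ 1) →
      ∃ i, ∀ j, v (a i j) ≤ v (a i ⟨0, hn i⟩)) :
    -- (1) the products indexed by I' generate the unit ideal
    (Ideal.span {x : B | ∃ r : (i : Fin N) → Fin (n i),
        (∃ i, r i = ⟨0, hn i⟩) ∧ x = ∏ i, a i (r i)} = ⊤) ∧
    -- (2) for r ∈ I', testing against I' is the same as testing against I
    (∀ r : (i : Fin N) → Fin (n i), (∃ i, r i = ⟨0, hn i⟩) →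
      ∀ v : Valuation B Γ, ValUnbounded v → (∀ x ∈ A, v x ≤ 1) →
      ((∀ s : (i : Fin N) → Fin (n i), (∃ i, s i = ⟨0, hn i⟩) →
          v (∏ i, a i (s i)) ≤ v (∏ i, a i (r i))) ↔
        (∀ s : (i : Fin N) → Fin (n i), v (∏ i, a i (s i)) ≤ v (∏ i, a i (r i))))) ∧
    -- (3) the rational domains indexed by I' cover Val(B,A)
    (∀ v : Valuation B Γ, ValUnbounded v → (∀ x ∈ A, v x ≤ 1) →
      ∃ r : (i : Fin N) → Fin (n i), (∃ i, r i = ⟨0, hn i⟩) ∧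
        ∀ s : (i : Fin N) → Fin (n i), (∃ i, s i = ⟨0, hn i⟩) →
          v (∏ i, a i (s i)) ≤ v (∏ i, a i (r i))) ∧
    -- (4) the refinement property
    (∀ r : (i : Fin N) → Fin (n i), ∀ i : Fin N, r i = ⟨0, hn i⟩ →
      ∀ v : Valuation B Γ, ValUnbounded v → (∀ x ∈ A, v x ≤ 1) →
      (∀ s : (i : Fin N) → Fin (n i), v (∏ k, a k (s k)) ≤ v (∏ k, a k (r k))) →
      ∀ j, v (a i j) ≤ v (a i ⟨0, hn i⟩)) := by
  classical
  -- every valuation has a nonzero value on each generating family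
  have key : ∀ (v : Valuation B Γ) (i : Fin N), ∃ j, v (a i j) ≠ 0 := by
    intro v i
    by_contra h; push_neg at h
    have hle : Ideal.span (Set.range (a i)) ≤ v.supp :=
      Ideal.span_le.mpr (by rintro _ ⟨j, rfl⟩; exact h j)
    rw [hgen i] at hle
    have h1 : (1 : B) ∈ v.supp := hle Submodule.mem_top
    rw [Valuation.mem_supp_iff, map_one] at h1
    exact one_ne_zero h1
  have prodle : ∀ (v : Valuation B Γ) (s r : (i : Fin N) → Fin (n i)),
      (∀ k, v (a k (s k)) ≤ v (a k (r k))) →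
      v (∏ k, a k (s k)) ≤ v (∏ k, a k (r k)) := by
    intro v s r h
    rw [map_prod, map_prod]
    exact Finset.prod_le_prod' fun k _ => h k
  refine ⟨?_, ?_, ?_, ?_⟩
  · -- (1)
    by_contra hne
    obtain ⟨m, hmax, hle⟩ := Ideal.exists_le_maximal _ hne
    have hmp : m.IsPrime := hmax.isPrime
    set v : Valuation B Γ := trivVal m hmp with hv
    have hvA : ∀ x ∈ A, v x ≤ 1 := by
      intro x _
      rw [hv, trivVal_apply]; split <;> simp
    obtain ⟨i, hi⟩ := hcov v (trivVal_unbounded m hmp) hvA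
    have hnm : ∀ (k : Fin N) (j : Fin (n k)), v (a k j) ≠ 0 → a k j ∉ m := by
      intro k j hj hmem
      exact hj (by rw [hv, trivVal_apply, if_pos hmem])
    obtain ⟨j0, hj0⟩ := key v i
    have h0 : a i ⟨0, hn i⟩ ∉ m := by
      refine hnm i _ (fun h0 => hj0 ?_)
      exact le_antisymm (h0 ▸ hi j0) zero_le'
    choose c hc using fun k => key v k
    set r : (k : Fin N) → Fin (n k) := Function.update c i ⟨0, hn i⟩ with hrdef
    have hr : ∀ k, a k (r k) ∉ m := by
      intro k
      by_cases hk : k = i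
      · subst hk; rw [hrdef, Function.update_self]; exact h0
      · rw [hrdef, Function.update_of_ne hk]; exact hnm k _ (hc k)
    have hmem : (∏ k, a k (r k)) ∈ m :=
      hle (Ideal.subset_span ⟨r, ⟨i, Function.update_self i _ c⟩, rfl⟩)
    have hnz : v (∏ k, a k (r k)) ≠ 0 := by
      rw [map_prod]
      refine Finset.prod_ne_zero_iff.mpr fun k _ => ?_
      rw [hv, trivVal_apply, if_neg (hr k)]
      exact one_ne_zero
    exact hnz (by rw [hv, trivVal_apply, if_pos hmem])
  · -- (2)
    intro r _ v hub hA
    constructor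
    · intro h s
      obtain ⟨i, hi⟩ := hcov v hub hA
      have hle : v (∏ k, a k (s k)) ≤ v (∏ k, a k (Function.update s i ⟨0, hn i⟩ k)) := by
        refine prodle v s _ fun k => ?_
        by_cases hk : k = i
        · subst hk; rw [Function.update_self]; exact hi (s k)
        · rw [Function.update_of_ne hk]
      exact hle.trans (h _ ⟨i, Function.update_self i _ s⟩)
    · exact fun h s _ => h s
  · -- (3)
    intro v hub hA
    obtain ⟨i, hi⟩ := hcov v hub hA
    have hmax : ∀ k, ∃ j, ∀ j', v (a k j') ≤ v (a k j) := by
      intro k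
      haveI : Nonempty (Fin (n k)) := ⟨⟨0, hn k⟩⟩
      exact Finite.exists_max fun j => v (a k j)
    choose c hc using hmax
    refine ⟨Function.update c i ⟨0, hn i⟩, ⟨i, Function.update_self i _ c⟩,
      fun s _ => prodle v s _ fun k => ?_⟩
    by_cases hk : k = i
    · subst hk; rw [Function.update_self]; exact hi (s k)
    · rw [Function.update_of_ne hk]; exact hc k (s k)
  · -- (4)
    intro r i hri v _ _ hmaxv j
    choose c hc using fun k => key v k
    have hprod : v (∏ k, a k (c k)) ≠ 0 := by
      rw [map_prod]
      exact Finset.prod_ne_zero_iff.mpr fun k _ => hc k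
    have hvr : v (∏ k, a k (r k)) ≠ 0 :=
      fun h0 => hprod (le_antisymm (h0 ▸ hmaxv c) zero_le')
    have hs := hmaxv (Function.update r i j)
    have hfe : (fun k => a k (Function.update r i j k)) =
        Function.update (fun k => a k (r k)) i (a i j) := by
      funext k
      by_cases hk : k = i
      · subst hk; rw [Function.update_self, Function.update_self]
      · rw [Function.update_of_ne hk, Function.update_of_ne hk]
    rw [hfe, Finset.prod_update_of_mem (Finset.mem_univ i), ← Finset.erase_eq,
      ← Finset.mul_prod_erase Finset.univ _ (Finset.mem_univ i), hri] at hs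
    rw [← Finset.mul_prod_erase Finset.univ _ (Finset.mem_univ i), hri] at hvr
    rw [map_mul, map_mul] at hs
    have hP : v (∏ k ∈ Finset.univ.erase i, a k (r k)) ≠ 0 := by
      rw [map_mul] at hvr
      exact right_ne_zero_of_mul hvr
    exact (mul_le_mul_iff_left₀ (zero_lt_iff.mpr hP)).mp hs
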